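/- Let K be a field, n ≥ 1, and A ∈ K^{n×n}. The following three statements are equivalent: (i) A = F_p for some p ∈ K^n; (ii) R(A, g) = g(A) for all g ∈ K^n; (iii) R(A, e_0) = I_n. -/

import Mathlib

open Matrix

/-- The second companion matrix `F_p` of `p ∈ K^{n+1}`: columns `0,…,n-1` are
`e_1,…,e_n` and the last column is `p`. -/
def companion {K : Type*} [Field K] {n : ℕ} (p : Fin (n + 1) → K) :
    Matrix (Fin (n + 1)) (Fin (n + 1)) K :=
  Matrix.of fun i j => if j = Fin.last n then p i else if (i : ℕ) = (j : ℕ) + 1 then 1 else 0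

/-- The reachability (Krylov) matrix `R(A, g) = [g, Ag, …, A^{n-1} g]`. -/
def krylov {K : Type*} [Field K] {n : ℕ} (A : Matrix (Fin n) (Fin n) K) (g : Fin n → K) :
    Matrix (Fin n) (Fin n) K :=
  Matrix.of fun i j => (A ^ (j : ℕ)).mulVec g i

/-- `b(A) = Σ_{i=0}^{n-1} b_i A^i`. -/
def polyEval {K : Type*} [Field K] {n : ℕ} (b : Fin n → K) (A : Matrix (Fin n) (Fin n) K) :
    Matrix (Fin n) (Fin n) K :=
  ∑ i : Fin n, b i • A ^ (i : ℕ)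

lemma companion_pow_e0 {K : Type*} [Field K] {n : ℕ} (p : Fin (n + 1) → K)
    (m : ℕ) (hm : m ≤ n) :
    ((companion p) ^ m).mulVec (Pi.single (0 : Fin (n + 1)) (1 : K))
      = Pi.single (⟨m, Nat.lt_succ_of_le hm⟩ : Fin (n + 1)) 1 := by
  induction m with
  | zero =>
    rw [pow_zero, Matrix.one_mulVec]
    congr 1
  | succ m ih =>
    rw [pow_succ', ← Matrix.mulVec_mulVec, ih (Nat.le_of_succ_le hm)]
    funext i
    rw [Matrix.mulVec_single]
    have hne : (⟨m, by omega⟩ : Fin (n + 1)) ≠ Fin.last n := by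
      simp [Fin.ext_iff]; omega
    simp only [companion, Matrix.of_apply, if_neg hne, mul_one]
    rw [Pi.single_apply]
    simp [Fin.ext_iff, eq_comm]
    intro h; omega

lemma krylov_e0_cols {K : Type*} [Field K] {n : ℕ}
    {A : Matrix (Fin (n + 1)) (Fin (n + 1)) K}
    (h : krylov A (Pi.single (0 : Fin (n + 1)) (1 : K)) = 1) (j : Fin (n + 1)) :
    (A ^ (j : ℕ)).mulVec (Pi.single (0 : Fin (n + 1)) (1 : K)) = Pi.single j 1 := by
  funext i
  have := congrFun (congrFun h i) j
  simp only [krylov, Matrix.of_apply] at this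
  rw [this, Matrix.one_apply, Pi.single_apply, eq_comm]

lemma pow_entry_eq {K : Type*} [Field K] {n : ℕ}
    {A : Matrix (Fin (n + 1)) (Fin (n + 1)) K}
    (h : krylov A (Pi.single (0 : Fin (n + 1)) (1 : K)) = 1) (m : ℕ) (i j : Fin (n + 1)) :
    (A ^ m) i j = ((A ^ (m + (j : ℕ))).mulVec (Pi.single (0 : Fin (n + 1)) (1 : K))) i := by
  have h1 : ((A ^ m).mulVec (Pi.single j (1 : K))) i = (A ^ m) i j := by
    simp [Matrix.mulVec_single]
  rw [← h1, ← krylov_e0_cols h j, Matrix.mulVec_mulVec, ← pow_add]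

/-- Lemma 1: for `A ∈ K^{n×n}` (with `n ≥ 1`), the following are equivalent:
(i) `A = F_p` for some `p`; (ii) `R(A,g) = g(A)` for all `g`; (iii) `R(A, e_0) = I_n`. -/
theorem companion_tfae {K : Type*} [Field K] {n : ℕ}
    (A : Matrix (Fin (n + 1)) (Fin (n + 1)) K) :
    [(∃ p : Fin (n + 1) → K, A = companion p),
     (∀ g : Fin (n + 1) → K, krylov A g = polyEval g A),
     (krylov A (Pi.single (0 : Fin (n + 1)) (1 : K)) = 1)].TFAE := by
  tfae_have 1 → 3
  · rintro ⟨p, rfl⟩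
    funext i j
    have := companion_pow_e0 p (j : ℕ) (Nat.lt_succ_iff.mp j.isLt)
    simp only [krylov, Matrix.of_apply, this, Matrix.one_apply, Pi.single_apply]
  tfae_have 3 → 1
  · intro h
    refine ⟨fun i => A i (Fin.last n), ?_⟩
    funext i j
    by_cases hj : j = Fin.last n
    · subst hj; simp [companion]
    · have hjn : (j : ℕ) < n := Fin.val_lt_last hj
      have h1 : A i j = ((A ^ (1 + (j : ℕ))).mulVec (Pi.single (0 : Fin (n + 1)) (1 : K))) i := by
        have := pow_entry_eq h 1 i j; rwa [pow_one] at this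
      have h2 : (1 + (j : ℕ)) = ((⟨(j : ℕ) + 1, by omega⟩ : Fin (n + 1)) : ℕ) := by
        simp [Nat.add_comm]
      rw [h1, h2, krylov_e0_cols h]
      simp only [companion, Matrix.of_apply, if_neg hj, Pi.single_apply]
      simp [Fin.ext_iff, eq_comm]
  tfae_have 3 → 2
  · intro h g
    funext i j
    simp only [krylov, Matrix.of_apply, polyEval, Matrix.sum_apply, Matrix.smul_apply,
      smul_eq_mul, Matrix.mulVec, dotProduct]
    refine Finset.sum_congr rfl fun k _ => ?_
    rw [pow_entry_eq h (j : ℕ) i k, pow_entry_eq h (k : ℕ) i j]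
    simp only [Matrix.mulVec, dotProduct, Nat.add_comm (j : ℕ) (k : ℕ)]
    ring
  tfae_have 2 → 3
  · intro h
    rw [h (Pi.single 0 1)]
    unfold polyEval
    rw [Finset.sum_eq_single (0 : Fin (n + 1))]
    · simp
    · intro b _ hb; simp [Pi.single_apply, hb]
    · simp
  tfae_finish
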